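/- For every connected graph G, the power domination number of the shadow graph S(G) satisfies γ_p(G) ≤ γ_p(S(G)) ≤ 2γ_p(G). -/

import Mathlib

open SimpleGraph

/-- `G.Obs S v` : vertex `v` eventually becomes monitored (black) when starting
from the set `S` and iteratively applying the zero-forcing propagation rule:
if a monitored vertex has exactly one unmonitored neighbor, that neighbor
becomes monitored. -/
inductive SimpleGraph.Obs {V : Type*} (G : SimpleGraph V) (S : Set V) : V → Prop
  | init {v : V} : v ∈ S → G.Obs S v
  | force {v w : V} : G.Obs S v → G.Adj v w →
      (∀ u, G.Adj v u → u ≠ w → G.Obs S u) → G.Obs S w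

/-- `S` is a zero forcing set of `G`. -/
def SimpleGraph.IsZeroForcingSet {V : Type*} (G : SimpleGraph V) (S : Set V) : Prop :=
  ∀ v, G.Obs S v

/-- The zero forcing number `Z(G)`. -/
noncomputable def SimpleGraph.zeroForcingNumber {V : Type*} (G : SimpleGraph V) : ℕ :=
  sInf {n | ∃ S : Set V, S.ncard = n ∧ G.IsZeroForcingSet S}

/-- The closed neighborhood `N[S]` of a set of vertices. -/
def SimpleGraph.closedNbhdSet {V : Type*} (G : SimpleGraph V) (S : Set V) : Set V :=
  S ∪ {w | ∃ v ∈ S, G.Adj v w}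

/-- `S` is a power dominating set of `G`: `N[S]` is a zero forcing set. -/
def SimpleGraph.IsPowerDominatingSet {V : Type*} (G : SimpleGraph V) (S : Set V) : Prop :=
  G.IsZeroForcingSet (G.closedNbhdSet S)

/-- The power domination number `γₚ(G)`. -/
noncomputable def SimpleGraph.powerDominationNumber {V : Type*} (G : SimpleGraph V) : ℕ :=
  sInf {n | ∃ S : Set V, S.ncard = n ∧ G.IsPowerDominatingSet S}

/-- The shadow graph of `G`: for each vertex `v` (copy `Sum.inl v`) a shadow vertex
`Sum.inr v` is added, adjacent exactly to the `G`-neighbors of `v`. -/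
def SimpleGraph.shadowGraph {V : Type*} (G : SimpleGraph V) : SimpleGraph (V ⊕ V) :=
  SimpleGraph.fromRel (fun x y =>
    match x, y with
    | Sum.inl a, Sum.inl b => G.Adj a b
    | Sum.inl a, Sum.inr b => G.Adj a b
    | _, _ => False)

namespace Stmt17Aux

variable {V : Type*} {G : SimpleGraph V}

lemma sadj_ll {a b : V} : G.shadowGraph.Adj (.inl a) (.inl b) ↔ G.Adj a b := by
  simp only [shadowGraph, fromRel_adj]
  constructor
  · rintro ⟨-, h | h⟩; exact h; exact h.symm
  · intro h; exact ⟨by simpa using h.ne, Or.inl h⟩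

lemma sadj_lr {a b : V} : G.shadowGraph.Adj (.inl a) (.inr b) ↔ G.Adj a b := by
  simp only [shadowGraph, fromRel_adj]
  constructor
  · rintro ⟨-, h | h⟩; exact h; exact h.elim
  · intro h; exact ⟨by simp, Or.inl h⟩

lemma sadj_rl {a b : V} : G.shadowGraph.Adj (.inr a) (.inl b) ↔ G.Adj a b := by
  simp only [shadowGraph, fromRel_adj]
  constructor
  · rintro ⟨-, h | h⟩; exact h.elim; exact h.symm
  · intro h; exact ⟨by simp, Or.inr h.symm⟩

lemma sadj_rr {a b : V} : ¬ G.shadowGraph.Adj (.inr a) (.inr b) := by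
  simp only [shadowGraph, fromRel_adj]
  rintro ⟨-, h | h⟩ <;> exact h

/-- the projection -/
def pr : V ⊕ V → V := Sum.elim id id

lemma sadj_proj {x y : V ⊕ V} (h : G.shadowGraph.Adj x y) : G.Adj (pr x) (pr y) := by
  rcases x with a | a <;> rcases y with b | b
  · exact (sadj_ll.mp h)
  · exact (sadj_lr.mp h)
  · exact (sadj_rl.mp h)
  · exact absurd h sadj_rr

lemma obs_proj {T : Set (V ⊕ V)} {x : V ⊕ V}
    (h : G.shadowGraph.Obs (G.shadowGraph.closedNbhdSet T) x) :
    G.Obs (G.closedNbhdSet (pr '' T)) (pr x) := by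
  induction h with
  | @init x hx =>
    rcases hx with hx | ⟨y, hy, hadj⟩
    · exact .init (Or.inl ⟨x, hx, rfl⟩)
    · exact .init (Or.inr ⟨pr y, ⟨y, hy, rfl⟩, sadj_proj hadj⟩)
  | @force v w hv hadj hall ihv ihall =>
    rcases v with a | a <;> rcases w with b | b
    · -- force inl a → inl b : use obs of inr b
      have hab : G.Adj a b := sadj_ll.mp hadj
      have := ihall (.inr b) (sadj_lr.mpr hab) (by simp)
      simpa [pr] using this
    · have hab : G.Adj a b := sadj_lr.mp hadj
      have := ihall (.inl b) (sadj_ll.mpr hab) (by simp)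
      simpa [pr] using this
    · have hab : G.Adj a b := sadj_rl.mp hadj
      refine Obs.force (w := b) (by simpa [pr] using ihv) hab ?_
      intro c hc hcb
      have := ihall (.inl c) (sadj_rl.mpr hc) (by simpa using hcb)
      simpa [pr] using this
    · exact absurd hadj sadj_rr

lemma obs_lift {S : Set V} {v : V} (h : G.Obs (G.closedNbhdSet S) v) :
    G.shadowGraph.Obs (G.shadowGraph.closedNbhdSet (Sum.inl '' S ∪ Sum.inr '' S)) (Sum.inl v) ∧
    G.shadowGraph.Obs (G.shadowGraph.closedNbhdSet (Sum.inl '' S ∪ Sum.inr '' S)) (Sum.inr v) := by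
  induction h with
  | @init v hv =>
    rcases hv with hv | ⟨s, hs, hadj⟩
    · constructor
      · exact .init (Or.inl (Or.inl ⟨v, hv, rfl⟩))
      · exact .init (Or.inl (Or.inr ⟨v, hv, rfl⟩))
    · constructor
      · exact .init (Or.inr ⟨.inl s, Or.inl ⟨s, hs, rfl⟩, sadj_ll.mpr hadj⟩)
      · exact .init (Or.inr ⟨.inl s, Or.inl ⟨s, hs, rfl⟩, sadj_lr.mpr hadj⟩)
  | @force a w ha hadj hall iha ihall =>
    have hl : G.shadowGraph.Obs (G.shadowGraph.closedNbhdSet (Sum.inl '' S ∪ Sum.inr '' S))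
        (Sum.inl w) := by
      refine Obs.force (v := .inr a) iha.2 (sadj_rl.mpr hadj) ?_
      rintro (c | c) hc hcw
      · exact (ihall c (sadj_rl.mp hc) (by simpa using hcw)).1
      · exact absurd hc sadj_rr
    refine ⟨hl, ?_⟩
    refine Obs.force (v := .inl a) iha.1 (sadj_lr.mpr hadj) ?_
    rintro (c | c) hc hcw
    · rcases eq_or_ne c w with rfl | hne
      · exact hl
      · exact (ihall c (sadj_ll.mp hc) hne).1
    · exact (ihall c (sadj_lr.mp hc) (by simpa using hcw)).2

lemma univ_pds {W : Type*} (H : SimpleGraph W) : H.IsPowerDominatingSet Set.univ :=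
  fun v => .init (Or.inl (Set.mem_univ v))

lemma pdn_nonempty {W : Type*} (H : SimpleGraph W) :
    {n | ∃ S : Set W, S.ncard = n ∧ H.IsPowerDominatingSet S}.Nonempty :=
  ⟨_, Set.univ, rfl, univ_pds H⟩

end Stmt17Aux

open Stmt17Aux in
theorem stmt17 {V : Type*} (G : SimpleGraph V) (hconn : G.Connected) :
    G.powerDominationNumber ≤ G.shadowGraph.powerDominationNumber ∧
    G.shadowGraph.powerDominationNumber ≤ 2 * G.powerDominationNumber := by
  constructor
  · -- lower bound
    obtain ⟨T, hTcard, hTpds⟩ := Nat.sInf_mem (pdn_nonempty G.shadowGraph)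
    set S : Set V := pr '' T with hSdef
    have hSpds : G.IsPowerDominatingSet S := by
      intro v
      have := obs_proj (G := G) (hTpds (Sum.inl v))
      simpa [pr, hSdef] using this
    have h1 : G.powerDominationNumber ≤ S.ncard := Nat.sInf_le ⟨S, rfl, hSpds⟩
    have h2 : S.ncard ≤ T.ncard := by
      by_cases hT : T.Finite
      · exact Set.ncard_image_le hT
      · have hSinf : S.Infinite := by
          intro hSfin
          apply hT
          have hsub : T ⊆ Sum.inl '' S ∪ Sum.inr '' S := by
            rintro (a | a) ha
            · exact Or.inl ⟨a, ⟨.inl a, ha, rfl⟩, rfl⟩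
            · exact Or.inr ⟨a, ⟨.inr a, ha, rfl⟩, rfl⟩
          exact ((hSfin.image _).union (hSfin.image _)).subset hsub
        rw [hSinf.ncard, Set.Infinite.ncard hT]
    rw [show G.shadowGraph.powerDominationNumber = T.ncard from hTcard.symm]
    exact h1.trans h2
  · -- upper bound
    obtain ⟨S, hScard, hSpds⟩ := Nat.sInf_mem (pdn_nonempty G)
    set T : Set (V ⊕ V) := Sum.inl '' S ∪ Sum.inr '' S with hTdef
    have hTpds : G.shadowGraph.IsPowerDominatingSet T := by
      rintro (v | v)
      · exact (obs_lift (hSpds v)).1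
      · exact (obs_lift (hSpds v)).2
    have hcard : T.ncard = 2 * S.ncard := by
      by_cases hS : S.Finite
      · rw [hTdef, Set.ncard_union_eq ?_ (hS.image _) (hS.image _),
          Set.ncard_image_of_injective _ Sum.inl_injective,
          Set.ncard_image_of_injective _ Sum.inr_injective, two_mul]
        rw [Set.disjoint_left]
        rintro x ⟨a, -, rfl⟩ ⟨b, -, h⟩
        exact absurd h (by simp)
      · have hSinf : S.Infinite := hS
        have hTinf : T.Infinite :=
          (hSinf.image Sum.inl_injective.injOn).mono Set.subset_union_left
        rw [hTinf.ncard, hSinf.ncard, mul_zero]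
    calc G.shadowGraph.powerDominationNumber ≤ T.ncard := Nat.sInf_le ⟨T, rfl, hTpds⟩
      _ = 2 * G.powerDominationNumber := by rw [hcard, hScard]; rfl
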